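/- Define H(x,y,t) = (y² − 4xt)^{−1/2} on {y² − 4xt > 0}, and for p > 0, t > 0, y ∈ ℝ define x(p,y,t) = y²/(4t) − 2^{−4/3}·(t·p²)^{−1/3}. Then y² − 4·x(p,y,t)·t = (2t/p)^{2/3} > 0 and H_x(x(p,y,t), y, t) = p; that is, the fundamental solution H = (y²−4xt)^{−1/2} corresponds under Legendre transform to the Class C data A_p = 2^{−4/3}(t p²)^{−1/3}, B = −y²/(4t). -/

import Mathlib

/-- Partial derivative of `f : ℝ³ → ℝ` in direction `v`, as a function. -/
noncomputable def pd (v : ℝ × ℝ × ℝ) (f : ℝ × ℝ × ℝ → ℝ) : ℝ × ℝ × ℝ → ℝ :=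
  fun q => fderiv ℝ f q v

/-- ∂/∂x for functions of (x, y, t). -/
noncomputable def px : (ℝ × ℝ × ℝ → ℝ) → ℝ × ℝ × ℝ → ℝ := pd (1, 0, 0)

/-- For `H(x,y,t) = (y² - 4xt)^(-1/2)` and
`x(p,y,t) = y²/(4t) - 2^(-4/3) (t p²)^(-1/3)` (with `p > 0`, `t > 0`), one has
`y² - 4 x(p,y,t) t = (2t/p)^(2/3) > 0` and `H_x(x(p,y,t), y, t) = p`: the
fundamental solution corresponds to the Class C data
`A_p = 2^(-4/3)(t p²)^(-1/3)`, `B = -y²/(4t)`. -/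
theorem stmt18 :
    let H : ℝ × ℝ × ℝ → ℝ := fun q => (q.2.1 ^ 2 - 4 * q.1 * q.2.2) ^ (-(1 / 2 : ℝ))
    let x : ℝ × ℝ × ℝ → ℝ := fun q =>
      q.2.1 ^ 2 / (4 * q.2.2) - (2 : ℝ) ^ (-(4 / 3 : ℝ)) * (q.2.2 * q.1 ^ 2) ^ (-(1 / 3 : ℝ))
    ∀ p > (0 : ℝ), ∀ y : ℝ, ∀ t > (0 : ℝ),
      (y ^ 2 - 4 * x (p, y, t) * t = (2 * t / p) ^ ((2 : ℝ) / 3) ∧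
        0 < (2 * t / p) ^ ((2 : ℝ) / 3)) ∧
      px H (x (p, y, t), y, t) = p := by
  intro H x p hp y t ht
  have hbpos : (0 : ℝ) < 2 * t / p := by positivity
  have hval : y ^ 2 - 4 * x (p, y, t) * t = (2 * t / p) ^ ((2 : ℝ) / 3) := by
    show y ^ 2 - 4 * (y ^ 2 / (4 * t) - (2:ℝ) ^ (-(4/3:ℝ)) * (t * p ^ 2) ^ (-(1/3:ℝ))) * t
        = (2 * t / p) ^ ((2:ℝ)/3)
    have h1 : y ^ 2 - 4 * (y ^ 2 / (4 * t) - (2:ℝ) ^ (-(4/3:ℝ)) * (t * p ^ 2) ^ (-(1/3:ℝ))) * t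
        = 4 * t * ((2:ℝ) ^ (-(4/3:ℝ)) * (t * p ^ 2) ^ (-(1/3:ℝ))) := by
      field_simp; ring
    have e2 : (t * p ^ 2) ^ (-(1/3:ℝ)) = t ^ (-(1/3:ℝ)) * p ^ (-(2/3:ℝ)) := by
      rw [Real.mul_rpow ht.le (by positivity), ← Real.rpow_natCast p 2,
        ← Real.rpow_mul hp.le]
      norm_num
    have e3 : (2 * t / p) ^ ((2:ℝ)/3)
        = (2:ℝ) ^ ((2:ℝ)/3) * t ^ ((2:ℝ)/3) * p ^ (-(2/3:ℝ)) := by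
      rw [Real.div_rpow (by positivity) hp.le, Real.mul_rpow (by norm_num) ht.le,
        Real.rpow_neg hp.le, div_eq_mul_inv]
    have e4 : (4:ℝ) * (2:ℝ) ^ (-(4/3:ℝ)) = (2:ℝ) ^ ((2:ℝ)/3) := by
      have : (4:ℝ) = (2:ℝ) ^ ((2:ℝ)) := by
        rw [show ((2:ℝ):ℝ) = ((2:ℕ):ℝ) by norm_num, Real.rpow_natCast]; norm_num
      rw [this, ← Real.rpow_add (by norm_num)]; norm_num
    have e5 : t * t ^ (-(1/3:ℝ)) = t ^ ((2:ℝ)/3) := by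
      nth_rewrite 1 [← Real.rpow_one t]
      rw [← Real.rpow_add ht]; norm_num
    rw [h1, e2, e3]
    calc 4 * t * ((2:ℝ) ^ (-(4/3:ℝ)) * (t ^ (-(1/3:ℝ)) * p ^ (-(2/3:ℝ))))
        = (4 * (2:ℝ) ^ (-(4/3:ℝ))) * (t * t ^ (-(1/3:ℝ))) * p ^ (-(2/3:ℝ)) := by ring
      _ = (2:ℝ) ^ ((2:ℝ)/3) * t ^ ((2:ℝ)/3) * p ^ (-(2/3:ℝ)) := by rw [e4, e5]
  refine ⟨⟨hval, Real.rpow_pos_of_pos hbpos _⟩, ?_⟩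
  set X := x (p, y, t) with hX
  have hupos : 0 < y ^ 2 - 4 * X * t := hval ▸ Real.rpow_pos_of_pos hbpos _
  have hfst : HasFDerivAt (fun q : ℝ × ℝ × ℝ => q.1)
      (ContinuousLinearMap.fst ℝ ℝ (ℝ × ℝ)) (X, y, t) := hasFDerivAt_fst
  have hy2 : HasFDerivAt (fun q : ℝ × ℝ × ℝ => q.2.1)
      ((ContinuousLinearMap.fst ℝ ℝ ℝ).comp (ContinuousLinearMap.snd ℝ ℝ (ℝ × ℝ)))
      (X, y, t) := hasFDerivAt_fst.comp _ hasFDerivAt_snd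
  have ht2 : HasFDerivAt (fun q : ℝ × ℝ × ℝ => q.2.2)
      ((ContinuousLinearMap.snd ℝ ℝ ℝ).comp (ContinuousLinearMap.snd ℝ ℝ (ℝ × ℝ)))
      (X, y, t) := hasFDerivAt_snd.comp _ hasFDerivAt_snd
  have hsq : HasDerivAt (fun z : ℝ => z ^ 2) (2 * y) y := by
    simpa using hasDerivAt_pow 2 y
  have hu : HasFDerivAt (fun q : ℝ × ℝ × ℝ => q.2.1 ^ 2 - 4 * q.1 * q.2.2) _ (X, y, t) :=
    (hsq.comp_hasFDerivAt (h₂ := fun z : ℝ => z ^ 2) _ hy2).fun_sub ((hfst.const_mul 4).fun_mul ht2)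
  have hr : HasDerivAt (fun z : ℝ => z ^ (-(1/2 : ℝ)))
      (-(1/2 : ℝ) * (y ^ 2 - 4 * X * t) ^ (-(1/2 : ℝ) - 1)) (y ^ 2 - 4 * X * t) :=
    Real.hasDerivAt_rpow_const (Or.inl (ne_of_gt hupos))
  have hH : HasFDerivAt H _ (X, y, t) := hr.comp_hasFDerivAt (h₂ := fun z : ℝ => z ^ (-(1/2 : ℝ))) (X, y, t) hu
  have hpx : px H (X, y, t) = fderiv ℝ H (X, y, t) (1, 0, 0) := rfl
  rw [hpx, hH.fderiv]
  simp only [ContinuousLinearMap.coe_smul', Pi.smul_apply, ContinuousLinearMap.sub_apply,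
    ContinuousLinearMap.add_apply, ContinuousLinearMap.smul_apply,
    ContinuousLinearMap.coe_comp', Function.comp_apply, ContinuousLinearMap.coe_fst',
    ContinuousLinearMap.coe_snd', smul_eq_mul]
  have hue : (y ^ 2 - 4 * X * t) ^ (-(1/2 : ℝ) - 1) = p / (2 * t) := by
    rw [hval, ← Real.rpow_mul hbpos.le]
    norm_num
    rw [Real.rpow_neg_one]
    field_simp
  rw [hue]
  field_simp
  ring
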